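/- arXiv:2009.00883 — 6 statements merged into one kernel-verified Lean document; each statement's English description precedes it below -/
import Mathlib

section
/- For all real numbers α ≥ 1 and all r, s ≥ 0, one has (4α/(α+1)²)·(r^((α+1)/2) − s^((α+1)/2))² ≤ (r^α − s^α)(r − s). -/
open intervalIntegral MeasureTheory

lemma cs_aux (s r γ : ℝ) (hs : 0 ≤ s) (hsr : s ≤ r) (hγ : 0 ≤ γ) :
    (∫ t in s..r, t ^ γ)^2 ≤ (r - s) * ∫ t in s..r, t ^ (2*γ) := by
  rcases eq_or_lt_of_le hsr with h | h
  · simp [h]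
  set I1 := ∫ t in s..r, t ^ γ with hI1
  set I2 := ∫ t in s..r, t ^ (2*γ) with hI2
  have hint1 : IntervalIntegrable (fun t : ℝ => t ^ γ) volume s r :=
    intervalIntegral.intervalIntegrable_rpow (Or.inl hγ)
  have hint2 : IntervalIntegrable (fun t : ℝ => t ^ (2*γ)) volume s r :=
    intervalIntegral.intervalIntegrable_rpow (Or.inl (by linarith))
  set lam := I1 / (r - s) with hlam
  have key : 0 ≤ ∫ t in s..r, (t ^ γ - lam)^2 :=
    intervalIntegral.integral_nonneg hsr (fun t _ => sq_nonneg _)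
  have expand : (∫ t in s..r, (t ^ γ - lam)^2)
      = I2 - 2 * lam * I1 + lam^2 * (r - s) := by
    have hcongr : ∀ t ∈ Set.uIcc s r, (t ^ γ - lam)^2
        = t ^ (2*γ) - 2 * lam * t ^ γ + lam^2 := by
      intro t ht
      rw [Set.uIcc_of_le hsr] at ht
      have ht0 : 0 ≤ t := le_trans hs ht.1
      have : t ^ (2*γ) = (t ^ γ)^2 := by
        rw [← Real.rpow_natCast (t ^ γ) 2, ← Real.rpow_mul ht0]
        ring_nf
      rw [this]; ring
    rw [intervalIntegral.integral_congr hcongr]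
    rw [intervalIntegral.integral_add (hint2.sub ((hint1.const_mul _))) intervalIntegrable_const,
      intervalIntegral.integral_sub hint2 (hint1.const_mul _),
      intervalIntegral.integral_const_mul, intervalIntegral.integral_const]
    simp [hI1, hI2]; ring
  rw [expand] at key
  have hrs : 0 < r - s := by linarith
  have hne : r - s ≠ 0 := ne_of_gt hrs
  have e : I2 - 2 * lam * I1 + lam ^ 2 * (r - s) = I2 - I1 ^ 2 / (r - s) := by
    rw [hlam]; field_simp; ring
  rw [e] at key
  have h2 : I1 ^ 2 / (r - s) ≤ I2 := by linarith
  rw [div_le_iff₀ hrs] at h2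
  linarith [h2]

lemma main_aux (α r s : ℝ) (hα : 1 ≤ α) (hs : 0 ≤ s) (hsr : s ≤ r) :
    (4 * α / (α + 1) ^ 2) * (r ^ ((α + 1) / 2) - s ^ ((α + 1) / 2)) ^ 2
      ≤ (r ^ α - s ^ α) * (r - s) := by
  set γ := (α - 1) / 2 with hγdef
  have hγ : 0 ≤ γ := by simp [hγdef]; linarith
  have hr : 0 ≤ r := le_trans hs hsr
  have I1eq : (∫ t in s..r, t ^ γ) = (r ^ ((α+1)/2) - s ^ ((α+1)/2)) / ((α+1)/2) := by
    rw [integral_rpow (Or.inl (by linarith))]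
    norm_num [hγdef]
    ring_nf
  have I2eq : (∫ t in s..r, t ^ (2*γ)) = (r ^ α - s ^ α) / α := by
    rw [integral_rpow (Or.inl (by linarith))]
    have : 2 * γ + 1 = α := by rw [hγdef]; ring
    rw [this]
  have hcs := cs_aux s r γ hs hsr hγ
  rw [I1eq, I2eq] at hcs
  have hα0 : (0:ℝ) < α := by linarith
  have hα1 : (0:ℝ) < α + 1 := by linarith
  have h1 : ((r ^ ((α+1)/2) - s ^ ((α+1)/2)) / ((α+1)/2))^2
      = (r ^ ((α+1)/2) - s ^ ((α+1)/2))^2 * (4 / (α+1)^2) := by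
    field_simp; ring
  rw [h1] at hcs
  calc (4 * α / (α + 1) ^ 2) * (r ^ ((α + 1) / 2) - s ^ ((α + 1) / 2)) ^ 2
      = α * ((r ^ ((α+1)/2) - s ^ ((α+1)/2))^2 * (4 / (α+1)^2)) := by
        field_simp
    _ ≤ α * ((r - s) * ((r ^ α - s ^ α) / α)) :=
        mul_le_mul_of_nonneg_left hcs hα0.le
    _ = (r ^ α - s ^ α) * (r - s) := by field_simp

theorem fundamental_ineq_0 (α r s : ℝ) (hα : 1 ≤ α) (hr : 0 ≤ r) (hs : 0 ≤ s) :
    (4 * α / (α + 1) ^ 2) * (r ^ ((α + 1) / 2) - s ^ ((α + 1) / 2)) ^ 2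
      ≤ (r ^ α - s ^ α) * (r - s) := by
  rcases le_total s r with h | h
  · exact main_aux α r s hα hs h
  · have := main_aux α s r hα hr h
    calc (4 * α / (α + 1) ^ 2) * (r ^ ((α + 1) / 2) - s ^ ((α + 1) / 2)) ^ 2
        = (4 * α / (α + 1) ^ 2) * (s ^ ((α + 1) / 2) - r ^ ((α + 1) / 2)) ^ 2 := by ring
      _ ≤ (s ^ α - r ^ α) * (s - r) := this
      _ = (r ^ α - s ^ α) * (r - s) := by ring
end

section
/- For all real numbers α ≥ 1 and all r, s ≥ 0, one has |r^α − s^α| ≤ (2α/(α+1))·(max{r,s})^((α−1)/2)·|r^((α+1)/2) − s^((α+1)/2)|. -/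
open Real

lemma key_rpow_lemma (γ : ℝ) (hγ : 1 ≤ γ) {x y : ℝ} (hy : 0 ≤ y) (hxy : y ≤ x) :
    x ^ γ - y ^ γ ≤ γ * x ^ (γ - 1) * (x - y) := by
  have hx : 0 ≤ x := hy.trans hxy
  rcases hx.eq_or_lt with h | hx
  · have hy0 : y = 0 := le_antisymm (hxy.trans h.ge) hy
    simp [← h, hy0, Real.zero_rpow (by positivity : γ ≠ 0)]
  · have ht : -1 ≤ y / x - 1 := by
      have : 0 ≤ y / x := div_nonneg hy hx.le
      linarith
    have hB := one_add_mul_self_le_rpow_one_add ht hγ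
    rw [add_sub_cancel] at hB
    have hB' : x ^ γ * (1 + γ * (y / x - 1)) ≤ x ^ γ * (y / x) ^ γ :=
      mul_le_mul_of_nonneg_left hB (by positivity)
    rw [Real.div_rpow hy hx.le, mul_div_cancel₀] at hB'
    · have hsplit : x ^ γ = x ^ (γ - 1) * x := by
        nth_rewrite 1 [show γ = γ - 1 + 1 by ring]
        rw [Real.rpow_add hx, Real.rpow_one]
      have ediv : x ^ γ / x = x ^ (γ - 1) := by
        rw [hsplit, mul_div_cancel_right₀ _ hx.ne']
      have e2 : x ^ γ * (y / x) = x ^ (γ - 1) * y := by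
        rw [← ediv]; ring
      have e : x ^ γ * (1 + γ * (y / x - 1))
          = x ^ γ + γ * (x ^ γ * (y / x)) - γ * x ^ γ := by ring
      rw [e, e2] at hB'
      have hsplit' : γ * x ^ γ = γ * (x ^ (γ - 1) * x) := by rw [hsplit]
      nlinarith [hsplit']
    · exact (Real.rpow_pos_of_pos hx γ).ne'

lemma aux_ineq (α r s : ℝ) (hα : 1 ≤ α) (hs : 0 ≤ s) (hsr : s ≤ r) :
    r ^ α - s ^ α ≤ (2 * α / (α + 1)) * r ^ ((α - 1) / 2)
        * (r ^ ((α + 1) / 2) - s ^ ((α + 1) / 2)) := by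
  have hr : 0 ≤ r := hs.trans hsr
  have hαpos : 0 < α + 1 := by linarith
  set β := (α + 1) / 2 with hβ
  set γ := 2 * α / (α + 1) with hγ
  have hγ1 : 1 ≤ γ := by
    rw [hγ, le_div_iff₀ hαpos]; linarith
  have hβγ : β * γ = α := by
    rw [hβ, hγ, div_mul_div_comm, div_eq_iff (mul_ne_zero two_ne_zero hαpos.ne')]; ring
  have hx : (r ^ β) ^ γ = r ^ α := by rw [← Real.rpow_mul hr, hβγ]
  have hy : (s ^ β) ^ γ = s ^ α := by rw [← Real.rpow_mul hs, hβγ]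
  have hx1 : (r ^ β) ^ (γ - 1) = r ^ ((α - 1) / 2) := by
    rw [← Real.rpow_mul hr]
    congr 1
    rw [hβ, hγ]
    field_simp
    ring
  have hxy : s ^ β ≤ r ^ β := Real.rpow_le_rpow hs hsr (by rw [hβ]; linarith)
  have := key_rpow_lemma γ hγ1 (Real.rpow_nonneg hs β) hxy
  rw [hx, hy, hx1] at this
  linarith [this]

theorem fundamental_ineq_1 (α r s : ℝ) (hα : 1 ≤ α) (hr : 0 ≤ r) (hs : 0 ≤ s) :
    |r ^ α - s ^ α|
      ≤ (2 * α / (α + 1)) * (max r s) ^ ((α - 1) / 2)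
        * |r ^ ((α + 1) / 2) - s ^ ((α + 1) / 2)| := by
  have hαpos : (0:ℝ) ≤ (α + 1) / 2 := by linarith
  have hα0 : (0:ℝ) ≤ α := by linarith
  rcases le_total s r with h | h
  · rw [max_eq_left h,
      abs_of_nonneg (sub_nonneg.2 (Real.rpow_le_rpow hs h hα0)),
      abs_of_nonneg (sub_nonneg.2 (Real.rpow_le_rpow hs h hαpos))]
    exact aux_ineq α r s hα hs h
  · rw [max_eq_right h, abs_sub_comm,
      abs_of_nonneg (sub_nonneg.2 (Real.rpow_le_rpow hr h hα0)),
      abs_sub_comm (r ^ _),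
      abs_of_nonneg (sub_nonneg.2 (Real.rpow_le_rpow hr h hαpos))]
    exact aux_ineq α s r hα hr h
end

section
/- Let α ≥ 1 and set ℓ = (α+1)/2. For all x ≥ 1, the function F(x) = (x^α − 1)(x − 1) − (4α/(α+1)²)(x^((α+1)/2) − 1)² is nonnegative. -/
open Real

lemma sinh_nonneg' {s : ℝ} (hs : 0 ≤ s) : 0 ≤ Real.sinh s := by
  simpa using Real.sinh_le_sinh.mpr hs

/-- `sinh s ≤ s * cosh s` for `s ≥ 0`. -/
lemma aux_sinh_le (s : ℝ) (hs : 0 ≤ s) : Real.sinh s ≤ s * Real.cosh s := by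
  have h : ∀ y ∈ Set.Ici (0:ℝ), HasDerivAt (fun z => z * Real.cosh z - Real.sinh z)
      (y * Real.sinh y) y := by
    intro y _
    have h1 : HasDerivAt (fun z : ℝ => z * Real.cosh z - Real.sinh z)
        (1 * Real.cosh y + y * Real.sinh y - Real.cosh y) y :=
      ((hasDerivAt_id y).mul (Real.hasDerivAt_cosh y)).sub (Real.hasDerivAt_sinh y)
    convert h1 using 1; ring
  have hmono : MonotoneOn (fun z => z * Real.cosh z - Real.sinh z) (Set.Ici 0) := by
    apply monotoneOn_of_deriv_nonneg (convex_Ici 0)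
    · exact Continuous.continuousOn (by continuity)
    · intro y hy
      exact ((h y (interior_subset hy)).differentiableAt).differentiableWithinAt
    · intro y hy
      rw [interior_Ici] at hy
      rw [(h y (Set.mem_Ici.mpr (le_of_lt hy))).deriv]
      exact mul_nonneg hy.le (sinh_nonneg' hy.le)
  have := hmono (Set.self_mem_Ici) (Set.mem_Ici.mpr hs) hs
  simp at this
  linarith

/-- `sinh s / s` is monotone: `v * sinh u ≤ u * sinh v` for `0 ≤ u ≤ v`. -/
lemma aux_mono (u v : ℝ) (hu : 0 ≤ u) (huv : u ≤ v) : v * Real.sinh u ≤ u * Real.sinh v := by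
  rcases eq_or_lt_of_le hu with h0 | h0
  · simp [← h0]
  rcases eq_or_lt_of_le huv with he | hlt
  · rw [he]
  have hv : 0 < v := lt_trans h0 hlt
  have key : Real.sinh u / u ≤ Real.sinh v / v := by
    have h : ∀ y ∈ Set.Icc u v, HasDerivAt (fun z => Real.sinh z / z)
        ((Real.cosh y * y - Real.sinh y * 1) / y ^ 2) y := by
      intro y hy
      exact (Real.hasDerivAt_sinh y).div (hasDerivAt_id y) (ne_of_gt (lt_of_lt_of_le h0 hy.1))
    have hmono : MonotoneOn (fun z => Real.sinh z / z) (Set.Icc u v) := by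
      apply monotoneOn_of_deriv_nonneg (convex_Icc u v)
      · apply ContinuousOn.div (Real.continuous_sinh.continuousOn) continuousOn_id
        intro y hy
        exact ne_of_gt (lt_of_lt_of_le h0 hy.1)
      · intro y hy
        have hy' := interior_subset hy
        exact ((h y hy').differentiableAt).differentiableWithinAt
      · intro y hy
        have hy' := interior_subset hy
        rw [(h y hy').deriv]
        have hypos : 0 < y := lt_of_lt_of_le h0 hy'.1
        apply div_nonneg _ (sq_nonneg y)
        have := aux_sinh_le y hypos.le
        nlinarith
    exact hmono (Set.mem_Icc.mpr ⟨le_refl u, huv⟩) (Set.mem_Icc.mpr ⟨huv, le_refl v⟩) huv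
  rw [div_le_div_iff₀ h0 hv] at key
  linarith

/-- `(cosh u - 1)/u²` is monotone. -/
lemma aux_cosh (u v : ℝ) (hu : 0 ≤ u) (huv : u ≤ v) :
    v ^ 2 * (Real.cosh u - 1) ≤ u ^ 2 * (Real.cosh v - 1) := by
  have c2 : ∀ s : ℝ, Real.cosh s - 1 = 2 * Real.sinh (s / 2) ^ 2 := by
    intro s
    have h1 : Real.cosh (2 * (s / 2)) = Real.cosh (s / 2) ^ 2 + Real.sinh (s / 2) ^ 2 :=
      Real.cosh_two_mul _
    have hsq : Real.cosh (s / 2) ^ 2 = Real.sinh (s / 2) ^ 2 + 1 := Real.cosh_sq _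
    have h2 : (2 : ℝ) * (s / 2) = s := by ring
    rw [h2] at h1
    linarith
  rw [c2 u, c2 v]
  have key := aux_mono (u / 2) (v / 2) (by linarith) (by linarith)
  have hsu : 0 ≤ Real.sinh (u / 2) := sinh_nonneg' (by linarith)
  have hsv : 0 ≤ Real.sinh (v / 2) := sinh_nonneg' (by linarith)
  have hv : 0 ≤ v := le_trans hu huv
  have h1 : v * Real.sinh (u/2) ≤ u * Real.sinh (v/2) := by linarith
  have h2 : (v * Real.sinh (u/2)) ^ 2 ≤ (u * Real.sinh (v/2)) ^ 2 :=
    pow_le_pow_left₀ (mul_nonneg hv hsu) h1 2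
  nlinarith [h2]

theorem F_nonneg (α x : ℝ) (hα : 1 ≤ α) (hx : 1 ≤ x) :
    0 ≤ (x ^ α - 1) * (x - 1) - (4 * α / (α + 1) ^ 2) * (x ^ ((α + 1) / 2) - 1) ^ 2 := by
  have hx0 : (0:ℝ) < x := lt_of_lt_of_le one_pos hx
  set t : ℝ := Real.log x / 2 with ht
  have htn : 0 ≤ t := by
    have := Real.log_nonneg hx
    positivity
  -- rewrite rpow in terms of exp
  have hrw : ∀ y : ℝ, x ^ y = Real.exp (2 * y * t) := by
    intro y
    rw [Real.rpow_def_of_pos hx0, ht]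
    ring_nf
  -- exp(2a) - 1 = 2 exp(a) sinh(a)
  have hes : ∀ a : ℝ, Real.exp (2 * a) - 1 = 2 * Real.exp a * Real.sinh a := by
    intro a
    rw [Real.sinh_eq]
    have : Real.exp a * Real.exp a = Real.exp (2 * a) := by
      rw [← Real.exp_add]; ring_nf
    have h2 : Real.exp a * Real.exp (-a) = 1 := by
      rw [← Real.exp_add]; simp
    field_simp
    nlinarith
  have e1 : x ^ α - 1 = 2 * Real.exp (α * t) * Real.sinh (α * t) := by
    rw [hrw α]
    have := hes (α * t)
    rw [show 2 * α * t = 2 * (α * t) by ring]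
    exact this
  have e2 : x - 1 = 2 * Real.exp t * Real.sinh t := by
    have hx1 : x = x ^ (1:ℝ) := (Real.rpow_one x).symm
    rw [hx1, hrw 1]
    have := hes t
    rw [show 2 * 1 * t = 2 * t by ring]
    exact this
  have e3 : x ^ ((α + 1) / 2) - 1 = 2 * Real.exp ((α+1)/2 * t) * Real.sinh ((α+1)/2 * t) := by
    rw [hrw ((α+1)/2)]
    have := hes ((α+1)/2 * t)
    rw [show 2 * ((α+1)/2) * t = 2 * ((α+1)/2 * t) by ring]
    exact this
  have e3' : (x ^ ((α + 1) / 2) - 1) ^ 2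
      = 4 * (Real.exp (α * t) * Real.exp t) * Real.sinh ((α+1)/2 * t) ^ 2 := by
    have hexp' : Real.exp (α * t) * Real.exp t = Real.exp ((α+1)/2 * t) ^ 2 := by
      rw [sq, ← Real.exp_add, ← Real.exp_add]; ring_nf
    rw [e3, hexp']; ring
  rw [e1, e2, e3']
  -- product to sum identities
  have hprod : 2 * Real.sinh (α * t) * Real.sinh t
      = Real.cosh ((α+1) * t) - Real.cosh ((α-1) * t) := by
    have ha : (α+1) * t = α * t + t := by ring
    have hb : (α-1) * t = α * t - t := by ring
    rw [ha, hb, Real.cosh_add, Real.cosh_sub]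
    ring
  have hsq : 2 * Real.sinh ((α+1)/2 * t) ^ 2 = Real.cosh ((α+1) * t) - 1 := by
    have h1 : Real.cosh (2 * ((α+1)/2 * t))
        = Real.cosh ((α+1)/2 * t) ^ 2 + Real.sinh ((α+1)/2 * t) ^ 2 := Real.cosh_two_mul _
    have hc : Real.cosh ((α+1)/2 * t) ^ 2 = Real.sinh ((α+1)/2 * t) ^ 2 + 1 := Real.cosh_sq _
    rw [show 2 * ((α+1)/2 * t) = (α+1) * t by ring] at h1
    linarith
  -- key inequality from aux_cosh
  have hkey : ((α+1) * t) ^ 2 * (Real.cosh ((α-1) * t) - 1)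
      ≤ ((α-1) * t) ^ 2 * (Real.cosh ((α+1) * t) - 1) := by
    apply aux_cosh _ _ (mul_nonneg (by linarith) htn) (by nlinarith)
  -- factor out positive exponentials
  have hexp : Real.exp (α * t) * Real.exp t = Real.exp ((α+1)/2 * t) ^ 2 := by
    rw [← Real.exp_add, ← Real.exp_nat_mul]
    congr 1
    push_cast
    ring
  have hA : (0:ℝ) < (α + 1) ^ 2 := by positivity
  have hE : (0:ℝ) < Real.exp ((α+1)/2 * t) ^ 2 := by positivity
  rcases eq_or_lt_of_le htn with h0 | h0
  · simp [← h0]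
  -- goal: bracket nonneg, after factoring
  have hbr : 0 ≤ Real.sinh (α * t) * Real.sinh t
      - (4 * α / (α + 1) ^ 2) * Real.sinh ((α+1)/2 * t) ^ 2 := by
    rw [div_mul_eq_mul_div, sub_nonneg, div_le_iff₀ hA]
    have ht2 : (0:ℝ) < t ^ 2 := by positivity
    nlinarith [hkey, Real.cosh_pos ((α-1)*t)]
  calc (0:ℝ) ≤ (4 * (Real.exp (α * t) * Real.exp t)) *
        (Real.sinh (α * t) * Real.sinh t
          - (4 * α / (α + 1) ^ 2) * Real.sinh ((α+1)/2 * t) ^ 2) := by positivity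
    _ = 2 * Real.exp (α * t) * Real.sinh (α * t) * (2 * Real.exp t * Real.sinh t) -
        4 * α / (α + 1) ^ 2 *
          (4 * (Real.exp (α * t) * Real.exp t) * Real.sinh ((α + 1) / 2 * t) ^ 2) := by
      ring
end

section
/- Let α ≥ 1. For all x ≥ 1, the function G(x) = (2α/(α+1))·x^((α−1)/2)·(x^((α+1)/2) − 1) − (x^α − 1) is nonnegative. -/
theorem G_nonneg (α x : ℝ) (hα : 1 ≤ α) (hx : 1 ≤ x) :
    0 ≤ (2 * α / (α + 1)) * x ^ ((α - 1) / 2) * (x ^ ((α + 1) / 2) - 1) - (x ^ α - 1) := by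
  have hx0 : (0:ℝ) < x := lt_of_lt_of_le one_pos hx
  have hα0 : (0:ℝ) < α := lt_of_lt_of_le one_pos hα
  have hw1 : (0:ℝ) ≤ (α - 1) / (2 * α) := by
    apply div_nonneg <;> linarith
  have hw2 : (0:ℝ) ≤ (α + 1) / (2 * α) := by
    apply div_nonneg <;> linarith
  have hsum : (α - 1) / (2 * α) + (α + 1) / (2 * α) = 1 := by
    field_simp
    ring
  have hX : (0:ℝ) ≤ x ^ α := (Real.rpow_pos_of_pos hx0 α).le
  have key := Real.geom_mean_le_arith_mean2_weighted hw1 hw2 hX zero_le_one hsum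
  have h1 : (x ^ α) ^ ((α - 1) / (2 * α)) = x ^ ((α - 1) / 2) := by
    rw [← Real.rpow_mul hx0.le]
    congr 1
    field_simp
  rw [Real.one_rpow, mul_one, h1] at key
  have h2 : x ^ ((α - 1) / 2) * x ^ ((α + 1) / 2) = x ^ α := by
    rw [← Real.rpow_add hx0]
    congr 1
    ring
  have key' : 2 * α * x ^ ((α - 1) / 2) ≤ (α - 1) * x ^ α + (α + 1) := by
    have h := mul_le_mul_of_nonneg_left key (by linarith : (0:ℝ) ≤ 2 * α)
    have e : 2 * α * ((α - 1) / (2 * α) * x ^ α + (α + 1) / (2 * α) * 1)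
        = (α - 1) * x ^ α + (α + 1) := by
      field_simp
    linarith [e ▸ h]
  have hb1 : (1:ℝ) ≤ x ^ ((α + 1) / 2) := Real.one_le_rpow hx (by linarith)
  have ha0 : (0:ℝ) ≤ x ^ ((α - 1) / 2) := (Real.rpow_pos_of_pos hx0 _).le
  have P : 0 ≤ 2 * α * x ^ ((α - 1) / 2) * (x ^ ((α + 1) / 2) - 1)
      - (α + 1) * (x ^ α - 1) := by
    nlinarith [h2, key', hb1, ha0]
  have eq : (2 * α / (α + 1)) * x ^ ((α - 1) / 2) * (x ^ ((α + 1) / 2) - 1) - (x ^ α - 1)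
      = (2 * α * x ^ ((α - 1) / 2) * (x ^ ((α + 1) / 2) - 1)
        - (α + 1) * (x ^ α - 1)) / (α + 1) := by
    field_simp
  rw [eq]
  exact div_nonneg P (by linarith)
end

section
/- Let α ≥ 1 and ℓ = (α+1)/2. For all x ≥ 1, one has ((ℓ−1)/ℓ)·(x^ℓ − 1) ≥ x^(1/2)·(x^(ℓ−1) − 1). -/
theorem F1_nonneg (α x : ℝ) (hα : 1 ≤ α) (hx : 1 ≤ x) (ℓ : ℝ) (hℓ : ℓ = (α + 1) / 2) :
    x ^ ((1 : ℝ) / 2) * (x ^ (ℓ - 1) - 1) ≤ ((ℓ - 1) / ℓ) * (x ^ ℓ - 1) := by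
  have hℓ1 : 1 ≤ ℓ := by rw [hℓ]; linarith
  have hℓ0 : (0:ℝ) < ℓ := by linarith
  set g : ℝ → ℝ := fun y => (ℓ - 1) * (y ^ ℓ - 1) - ℓ * y ^ (ℓ - 1/2) + ℓ * y ^ ((1:ℝ)/2)
    with hg
  have hderiv : ∀ y : ℝ, 0 < y → HasDerivAt g
      ((ℓ - 1) * (ℓ * y ^ (ℓ - 1)) - ℓ * ((ℓ - 1/2) * y ^ (ℓ - 1/2 - 1))
        + ℓ * ((1/2 : ℝ) * y ^ ((1:ℝ)/2 - 1))) y := by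
    intro y hy
    have h1 := Real.hasDerivAt_rpow_const (p := ℓ) (x := y) (Or.inl (ne_of_gt hy))
    have h2 := Real.hasDerivAt_rpow_const (p := ℓ - 1/2) (x := y) (Or.inl (ne_of_gt hy))
    have h3 := Real.hasDerivAt_rpow_const (p := (1:ℝ)/2) (x := y) (Or.inl (ne_of_gt hy))
    have h := (((h1.sub_const 1).const_mul (ℓ - 1)).sub (h2.const_mul ℓ)).add
      (h3.const_mul ℓ)
    exact h.congr_deriv (by ring)
  have hd_nonneg : ∀ y : ℝ, 1 ≤ y →
      0 ≤ (ℓ - 1) * (ℓ * y ^ (ℓ - 1)) - ℓ * ((ℓ - 1/2) * y ^ (ℓ - 1/2 - 1))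
        + ℓ * ((1/2 : ℝ) * y ^ ((1:ℝ)/2 - 1)) := by
    intro y hy
    have hy0 : (0:ℝ) < y := by linarith
    have hden : (0:ℝ) < 2*ℓ - 1 := by linarith
    have hne : (2*ℓ - 1) ≠ 0 := ne_of_gt hden
    have hw₁ : 0 ≤ (2*ℓ - 2) / (2*ℓ - 1) := by
      apply div_nonneg <;> linarith
    have hw₂ : 0 ≤ (1:ℝ) / (2*ℓ - 1) := by positivity
    have hsum : (2*ℓ - 2) / (2*ℓ - 1) + 1 / (2*ℓ - 1) = 1 := by field_simp; ring
    have hp₁ : (0:ℝ) ≤ y ^ (ℓ - 1) := (Real.rpow_pos_of_pos hy0 _).le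
    have hp₂ : (0:ℝ) ≤ y ^ ((1:ℝ)/2 - 1) := (Real.rpow_pos_of_pos hy0 _).le
    have amgm := Real.geom_mean_le_arith_mean2_weighted hw₁ hw₂ hp₁ hp₂ hsum
    have hgm : (y ^ (ℓ - 1)) ^ ((2*ℓ - 2) / (2*ℓ - 1)) *
        (y ^ ((1:ℝ)/2 - 1)) ^ ((1:ℝ) / (2*ℓ - 1)) = y ^ (ℓ - 1/2 - 1) := by
      rw [← Real.rpow_mul hy0.le, ← Real.rpow_mul hy0.le, ← Real.rpow_add hy0]
      congr 1
      field_simp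
      rw [div_eq_iff (by linarith)]; ring
    rw [hgm] at amgm
    have hc : (0:ℝ) ≤ ℓ * (ℓ - 1/2) := by nlinarith
    have hmul := mul_le_mul_of_nonneg_left amgm hc
    have e₁ : ℓ * (ℓ - 1/2) * ((2*ℓ - 2) / (2*ℓ - 1)) = ℓ * (ℓ - 1) := by
      rw [mul_div_assoc', div_eq_iff hne]; ring
    have e₂ : ℓ * (ℓ - 1/2) * ((1:ℝ) / (2*ℓ - 1)) = ℓ / 2 := by
      rw [mul_div_assoc', div_eq_iff hne]; ring
    nlinarith [hmul, e₁, e₂]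
  have hmono : MonotoneOn g (Set.Ici 1) := by
    apply monotoneOn_of_deriv_nonneg (convex_Ici 1)
    · intro y hy
      exact (hderiv y (lt_of_lt_of_le one_pos hy)).continuousAt.continuousWithinAt
    · intro y hy
      rw [interior_Ici] at hy
      exact (hderiv y (by linarith [Set.mem_Ioi.mp hy])).differentiableAt.differentiableWithinAt
    · intro y hy
      rw [interior_Ici] at hy
      have hy1 : (1:ℝ) < y := hy
      rw [(hderiv y (by linarith)).deriv]
      exact hd_nonneg y hy1.le
  have hg1 : g 1 = 0 := by simp [hg, Real.one_rpow]
  have hgx : 0 ≤ g x := by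
    have := hmono (Set.self_mem_Ici) (Set.mem_Ici.mpr hx) hx
    rwa [hg1] at this
  have hx0 : (0:ℝ) < x := by linarith
  have hprod : x ^ ((1:ℝ)/2) * x ^ (ℓ - 1) = x ^ (ℓ - 1/2) := by
    rw [← Real.rpow_add hx0]; congr 1; ring
  rw [div_mul_eq_mul_div, le_div_iff₀ hℓ0]
  simp only [hg] at hgx
  nlinarith [hgx, hprod]
end

section
/- Let α ≥ 1 and let v, w : Ω → [0,∞) be measurable on a finite measure space (Ω, μ). Then ∫ |v − w|² dμ ≤ μ(Ω)^((α−1)/(α+1)) · (∫ |v^((α+1)/2) − w^((α+1)/2)|² dμ)^(2/(α+1)). -/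
open MeasureTheory

private lemma real_add_rpow_le {a b p : ℝ} (ha : 0 ≤ a) (hb : 0 ≤ b) (hp : 1 ≤ p) :
    a ^ p + b ^ p ≤ (a + b) ^ p := by
  have := NNReal.add_rpow_le_rpow_add (⟨a, ha⟩ : NNReal) ⟨b, hb⟩ hp
  exact_mod_cast this

private lemma abs_rpow_le {r s β : ℝ} (hr : 0 ≤ r) (hs : 0 ≤ s) (hβ : 1 ≤ β) :
    |r - s| ^ β ≤ |r ^ β - s ^ β| := by
  wlog h : s ≤ r generalizing r s
  · rw [abs_sub_comm, abs_sub_comm (r ^ β)]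
    exact this hs hr (le_of_not_ge h)
  have h1 : s ^ β ≤ r ^ β := Real.rpow_le_rpow hs h (by linarith)
  rw [abs_of_nonneg (by linarith), abs_of_nonneg (by linarith)]
  have := real_add_rpow_le (a := r - s) (b := s) (by linarith) hs hβ
  have h2 : r - s + s = r := by ring
  rw [h2] at this
  linarith

private lemma pointwise_key {r s β : ℝ} (hr : 0 ≤ r) (hs : 0 ≤ s) (hβ : 1 ≤ β) :
    |r - s| ^ 2 ≤ (|r ^ β - s ^ β| ^ 2) ^ (1 / β) := by
  have hβ0 : 0 < β := by linarith
  have h := abs_rpow_le hr hs hβ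
  have hA : |r - s| ≤ |r ^ β - s ^ β| ^ (1 / β) := by
    have := Real.rpow_le_rpow (Real.rpow_nonneg (abs_nonneg _) β) h
      (le_of_lt (one_div_pos.2 hβ0))
    rwa [← Real.rpow_mul (abs_nonneg _), mul_one_div, div_self hβ0.ne',
      Real.rpow_one] at this
  calc |r - s| ^ 2 ≤ (|r ^ β - s ^ β| ^ (1 / β)) ^ 2 := pow_le_pow_left₀ (abs_nonneg _) hA 2
    _ = (|r ^ β - s ^ β| ^ 2) ^ (1 / β) := by
        rw [← Real.rpow_natCast (_ ^ (1 / β)) 2, ← Real.rpow_mul (abs_nonneg _), mul_comm,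
          Real.rpow_natCast_mul (abs_nonneg _)]


theorem holder_in_time {Ω : Type*} [MeasurableSpace Ω] (μ : Measure Ω)
    [IsFiniteMeasure μ] (α : ℝ) (hα : 1 ≤ α) (v w : Ω → ℝ)
    (hv : Measurable v) (hw : Measurable w)
    (hv0 : ∀ x, 0 ≤ v x) (hw0 : ∀ x, 0 ≤ w x)
    (h1 : Integrable (fun x => |v x - w x| ^ 2) μ)
    (h2 : Integrable (fun x => |v x ^ ((α + 1) / 2) - w x ^ ((α + 1) / 2)| ^ 2) μ) :
    ∫ x, |v x - w x| ^ 2 ∂μ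
      ≤ (μ Set.univ).toReal ^ ((α - 1) / (α + 1))
        * (∫ x, |v x ^ ((α + 1) / 2) - w x ^ ((α + 1) / 2)| ^ 2 ∂μ) ^ ((2 : ℝ) / (α + 1)) := by
  set β : ℝ := (α + 1) / 2 with hβdef
  have hβ : 1 ≤ β := by rw [hβdef]; linarith
  have hβ0 : 0 < β := by linarith
  have ha1 : (0:ℝ) < α + 1 := by linarith
  have hexp1 : (2 : ℝ) / (α + 1) = 1 / β := by rw [hβdef]; field_simp
  set g : Ω → ℝ := fun x => |v x ^ β - w x ^ β| ^ 2 with hgdef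
  have hgmeas : Measurable g := by
    apply Measurable.pow_const
    exact ((hv.pow_const β).sub (hw.pow_const β)).abs
  have hg0 : ∀ x, 0 ≤ g x := fun x => sq_nonneg _
  set h : Ω → ℝ := fun x => g x ^ (1 / β) with hhdef
  have hhmeas : Measurable h := hgmeas.pow_const _
  have hh0 : ∀ x, 0 ≤ h x := fun x => Real.rpow_nonneg (hg0 x) _
  have hpt : ∀ x, |v x - w x| ^ 2 ≤ h x := fun x =>
    pointwise_key (hv0 x) (hw0 x) hβ
  have hhint : Integrable h μ := by
    refine ((integrable_const (1:ℝ)).add h2).mono' hhmeas.aestronglyMeasurable ?_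
    filter_upwards with x
    rw [Real.norm_of_nonneg (hh0 x)]
    rcases le_total (g x) 1 with hx | hx
    · have : h x ≤ 1 := Real.rpow_le_one (hg0 x) hx (by positivity)
      have : (0:ℝ) ≤ g x := hg0 x
      simp only [Pi.add_apply]
      nlinarith [Real.rpow_le_one (hg0 x) hx (le_of_lt (one_div_pos.2 hβ0))]
    · have h1β : 1 / β ≤ 1 := by
        rw [div_le_one hβ0]; linarith
      have : h x ≤ g x ^ (1:ℝ) := Real.rpow_le_rpow_of_exponent_le hx h1β
      rw [Real.rpow_one] at this
      simp only [Pi.add_apply]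
      linarith
  have step1 : ∫ x, |v x - w x| ^ 2 ∂μ ≤ ∫ x, h x ∂μ :=
    integral_mono h1 hhint hpt
  rcases eq_or_lt_of_le hα with hα1 | hα1
  · -- α = 1
    subst hα1
    have hβ1 : β = 1 := by rw [hβdef]; norm_num
    have : ∫ x, h x ∂μ = ∫ x, g x ∂μ := by
      congr 1; funext x; rw [hhdef]; simp [hβ1]
    rw [this] at step1
    have e1 : ((1:ℝ) - 1) / (1 + 1) = 0 := by norm_num
    have e2 : (2:ℝ) / (1 + 1) = 1 := by norm_num
    rw [e1, e2, Real.rpow_zero, one_mul, Real.rpow_one]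
    exact step1
  · -- α > 1
    have hβ1 : 1 < β := by rw [hβdef]; linarith
    have hpq : β.HolderConjugate (β / (β - 1)) := Real.HolderConjugate.conjExponent hβ1
    set q : ℝ := β / (β - 1) with hqdef
    have hhq : ∀ x, h x ^ β = g x := by
      intro x
      rw [hhdef, ← Real.rpow_mul (hg0 x), one_div, inv_mul_cancel₀ hβ0.ne', Real.rpow_one]
    have hmemh : MemLp h (ENNReal.ofReal β) μ := by
      have hne0 : ENNReal.ofReal β ≠ 0 := by
        simp [ENNReal.ofReal_eq_zero, not_le, hβ0]
      have hnetop : ENNReal.ofReal β ≠ ⊤ := ENNReal.ofReal_ne_top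
      rw [← memLp_norm_rpow_iff (q := ENNReal.ofReal β)
        hhmeas.aestronglyMeasurable hne0 hnetop]
      have : (fun x => ‖h x‖ ^ (ENNReal.ofReal β).toReal) = g := by
        funext x
        rw [ENNReal.toReal_ofReal hβ0.le, Real.norm_of_nonneg (hh0 x), hhq x]
      rw [this, ENNReal.div_self hne0 hnetop, memLp_one_iff_integrable]
      exact h2
    have hmem1 : MemLp (fun _ : Ω => (1:ℝ)) (ENNReal.ofReal q) μ := memLp_const 1
    have key := integral_mul_le_Lp_mul_Lq_of_nonneg hpq
      (Filter.Eventually.of_forall hh0)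
      (Filter.Eventually.of_forall fun _ => zero_le_one) hmemh hmem1
    simp only [mul_one, Real.one_rpow] at key
    rw [integral_const, smul_eq_mul, mul_one] at key
    have heq : (fun a => h a ^ β) = g := funext hhq
    rw [heq] at key
    have hexp2 : 1 / q = (α - 1) / (α + 1) := by
      rw [hqdef, hβdef]; field_simp; ring
    have : ∫ x, h x ∂μ
        ≤ (μ Set.univ).toReal ^ ((α - 1) / (α + 1)) * (∫ x, g x ∂μ) ^ ((2:ℝ) / (α + 1)) := by
      rw [hexp1]
      calc ∫ x, h x ∂μ ≤ (∫ a, g a ∂μ) ^ (1 / β) * (μ Set.univ).toReal ^ (1 / q) := key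
        _ = (μ Set.univ).toReal ^ ((α - 1) / (α + 1)) * (∫ a, g a ∂μ) ^ (1 / β) := by
            rw [hexp2, mul_comm]
    exact le_trans step1 this
end
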